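/- Let n ≥ 1 and let c : ℕ^n → ℂ be a family of coefficients such that for some δ > 0 the family α ↦ |c_α| δ^{α_1 + ⋯ + α_n} (α ∈ ℕ^n) is summable. Let γ = (γ_1, …, γ_n) be a vector of positive integers and let β ∈ ℕ^n be such that γ·β ≤ γ·α for every α ∈ ℕ^n with c_α ≠ 0, where γ·α = ∑_{i=1}^n γ_i α_i. Define f̃ : ℂ^n × ℂ → ℂ by f̃(w, τ) = ∑_{α ∈ ℕ^n, c_α ≠ 0} c_α · w_1^{α_1} ⋯ w_n^{α_n} · τ^{γ·α − γ·β} (the sum of the family where it is summable, and 0 otherwise). Then for every point ũ = (ũ_1, …, ũ_n) ∈ ℂ^n with ũ_i ≠ 0 for all i, the function f̃ is complex analytic at the point (ũ, 0) ∈ ℂ^{n+1}. -/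

import Mathlib

open Finset

noncomputable section Stmt3Aux

variable {n : ℕ}

abbrev EE (n : ℕ) := (Fin n → ℂ) × ℂ

/-- Index type for the degree-`d` monomial `w^α τ^k`. -/
abbrev Idx (α : Fin n → ℕ) (k : ℕ) := (Σ i : Fin n, Fin (α i)) ⊕ Fin k

def coordL (α : Fin n → ℕ) (k : ℕ) : Idx α k → (EE n →L[ℂ] ℂ) :=
  Sum.elim (fun p => (ContinuousLinearMap.proj p.1).comp (ContinuousLinearMap.fst ℂ _ _))
    (fun _ => ContinuousLinearMap.snd ℂ _ _)

lemma norm_coordL_le (α : Fin n → ℕ) (k : ℕ) (j : Idx α k) : ‖coordL α k j‖ ≤ 1 := by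
  apply ContinuousLinearMap.opNorm_le_bound _ zero_le_one
  intro x
  rw [one_mul]
  rcases j with ⟨i, _⟩ | _
  · exact (norm_le_pi_norm x.1 i).trans (norm_fst_le x)
  · exact norm_snd_le x

def monD (α : Fin n → ℕ) (k d : ℕ) (h : Fintype.card (Idx α k) = d) :
    ContinuousMultilinearMap ℂ (fun _ : Fin d => EE n) ℂ :=
  ((ContinuousMultilinearMap.mkPiAlgebra ℂ (Idx α k) ℂ).compContinuousLinearMap
    (coordL α k)).domDomCongr (Fintype.equivFinOfCardEq h)

lemma norm_monD_le (α : Fin n → ℕ) (k d : ℕ) (h : Fintype.card (Idx α k) = d) :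
    ‖monD α k d h‖ ≤ 1 := by
  rw [monD, ContinuousMultilinearMap.norm_domDomCongr]
  refine (ContinuousMultilinearMap.norm_compContinuousLinearMap_le _ _).trans ?_
  have h1 : ‖ContinuousMultilinearMap.mkPiAlgebra ℂ (Idx α k) ℂ‖ ≤ 1 := by
    cases isEmpty_or_nonempty (Idx α k)
    · simp [ContinuousMultilinearMap.norm_mkPiAlgebra_of_empty]
    · exact ContinuousMultilinearMap.norm_mkPiAlgebra_le
  calc ‖ContinuousMultilinearMap.mkPiAlgebra ℂ (Idx α k) ℂ‖ * ∏ j, ‖coordL α k j‖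
      ≤ 1 * 1 := by
        apply mul_le_mul h1 (Finset.prod_le_one (fun _ _ => norm_nonneg _)
          (fun j _ => norm_coordL_le α k j)) (Finset.prod_nonneg fun _ _ => norm_nonneg _)
          zero_le_one
    _ = 1 := one_mul 1

lemma monD_apply (α : Fin n → ℕ) (k d : ℕ) (h : Fintype.card (Idx α k) = d) (y : EE n) :
    monD α k d h (fun _ => y) = (∏ i, y.1 i ^ α i) * y.2 ^ k := by
  simp only [monD, ContinuousMultilinearMap.domDomCongr_apply,
    ContinuousMultilinearMap.compContinuousLinearMap_apply,
    ContinuousMultilinearMap.mkPiAlgebra_apply]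
  rw [Fintype.prod_sum_type]
  congr 1
  · rw [← Finset.univ_sigma_univ, Finset.prod_sigma]
    simp [coordL]
  · simp [coordL]

end Stmt3Aux

noncomputable section Stmt3Ser

variable {n : ℕ} (c : (Fin n → ℕ) → ℂ) (γ β : Fin n → ℕ)

def kk (α : Fin n → ℕ) : ℕ := (∑ i, γ i * α i) - (∑ i, γ i * β i)

def deg (α : Fin n → ℕ) : ℕ := (∑ i, α i) + kk γ β α

lemma card_Idx (α : Fin n → ℕ) : Fintype.card (Idx α (kk γ β α)) = deg γ β α := by
  simp [Idx, deg]

def Ad (d : ℕ) : Finset (Fin n → ℕ) :=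
  Finset.filter (fun α => c α ≠ 0 ∧ deg γ β α = d)
    (Fintype.piFinset fun _ => Finset.range (d + 1))

lemma mem_Ad {d : ℕ} {α : Fin n → ℕ} : α ∈ Ad c γ β d ↔ c α ≠ 0 ∧ deg γ β α = d := by
  rw [Ad, Finset.mem_filter, and_iff_right_iff_imp]
  rintro ⟨-, hd⟩
  rw [Fintype.mem_piFinset]
  intro i
  rw [Finset.mem_range, Nat.lt_succ_iff, ← hd]
  exact le_trans (Finset.single_le_sum (fun j _ => Nat.zero_le (α j)) (Finset.mem_univ i))
    (Nat.le_add_right _ _)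

def ps : FormalMultilinearSeries ℂ (EE n) ℂ := fun d =>
  ∑ α ∈ (Ad c γ β d).attach,
    c α.1 • monD α.1 (kk γ β α.1) d
      (by rw [card_Idx]; exact ((mem_Ad c γ β).1 α.2).2)

lemma norm_ps_le (d : ℕ) : ‖ps c γ β d‖ ≤ ∑ α ∈ Ad c γ β d, ‖c α‖ := by
  refine (norm_sum_le _ _).trans ?_
  rw [← Finset.sum_attach (Ad c γ β d) (fun α => ‖c α‖)]
  apply Finset.sum_le_sum
  intro α _
  refine le_trans (ContinuousMultilinearMap.opNorm_smul_le _ _) ?_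
  exact mul_le_of_le_one_right (norm_nonneg _) (norm_monD_le _ _ _ _)

lemma ps_apply (d : ℕ) (y : EE n) :
    ps c γ β d (fun _ => y) =
      ∑ α ∈ Ad c γ β d, c α * (∏ i, y.1 i ^ α i) * y.2 ^ kk γ β α := by
  rw [ps, ContinuousMultilinearMap.sum_apply,
    ← Finset.sum_attach (Ad c γ β d) (fun α => c α * (∏ i, y.1 i ^ α i) * y.2 ^ kk γ β α)]
  apply Finset.sum_congr rfl
  intro α _
  rw [ContinuousMultilinearMap.smul_apply, monD_apply, smul_eq_mul, mul_assoc]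

def eqv : {α : Fin n → ℕ // c α ≠ 0} ≃ (Σ d : ℕ, {α : Fin n → ℕ // α ∈ Ad c γ β d}) where
  toFun α := ⟨deg γ β α.1, ⟨α.1, (mem_Ad c γ β).2 ⟨α.2, rfl⟩⟩⟩
  invFun x := ⟨x.2.1, ((mem_Ad c γ β).1 x.2.2).1⟩
  left_inv α := rfl
  right_inv x := by
    rcases x with ⟨d, α, h⟩
    obtain ⟨h1, h2⟩ := (mem_Ad c γ β).1 h
    subst h2
    rfl

end Stmt3Ser

theorem main_ball {n : ℕ} (c : (Fin n → ℕ) → ℂ) (δ : ℝ) (hδ : 0 < δ)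
    (hsum : Summable (fun α : Fin n → ℕ => ‖c α‖ * δ ^ (∑ i, α i)))
    (γ β : Fin n → ℕ)
    (f : (Fin n → ℂ) × ℂ → ℂ)
    (hf : ∀ p : (Fin n → ℂ) × ℂ,
      f p = ∑' α : {α : Fin n → ℕ // c α ≠ 0},
        c α.1 * (∏ i, p.1 i ^ (α.1 i)) *
          p.2 ^ ((∑ i, γ i * α.1 i) - (∑ i, γ i * β i))) :
    HasFPowerSeriesOnBall f (ps c γ β) 0 (ENNReal.ofReal (min δ 1)) := by
  set r : ℝ := min δ 1 with hr
  have hrpos : 0 < r := lt_min hδ one_pos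
  have hrδ : r ≤ δ := min_le_left _ _
  have hr1 : r ≤ 1 := min_le_right _ _
  -- bound for terms
  have hbound : ∀ d : ℕ, ∀ α ∈ Ad c γ β d, ‖c α‖ * r ^ d ≤ ‖c α‖ * δ ^ (∑ i, α i) := by
    intro d α hα
    obtain ⟨-, hdeg⟩ := (mem_Ad c γ β).1 hα
    have : r ^ d ≤ δ ^ (∑ i, α i) := by
      rw [← hdeg, deg, pow_add]
      calc r ^ (∑ i, α i) * r ^ kk γ β α
          ≤ δ ^ (∑ i, α i) * 1 := by
            apply mul_le_mul (pow_le_pow_left₀ hrpos.le hrδ _)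
              (pow_le_one₀ hrpos.le hr1) (pow_nonneg hrpos.le _) (pow_nonneg hδ.le _)
        _ = δ ^ (∑ i, α i) := mul_one _
    exact mul_le_mul_of_nonneg_left this (norm_nonneg _)
  -- summability of the degreewise bounds
  have hB : Summable (fun d => ∑ α ∈ Ad c γ β d, ‖c α‖ * δ ^ (∑ i, α i)) := by
    apply summable_of_sum_range_le (c := ∑' α : Fin n → ℕ, ‖c α‖ * δ ^ (∑ i, α i))
    · intro d
      exact Finset.sum_nonneg fun α _ =>
        mul_nonneg (norm_nonneg _) (pow_nonneg hδ.le _)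
    · intro N
      have hdisj : Set.PairwiseDisjoint ↑(Finset.range N) (Ad c γ β) := by
        intro a _ b _ hab
        apply Finset.disjoint_left.2
        intro α hαa hαb
        exact hab (((mem_Ad c γ β).1 hαa).2.symm.trans ((mem_Ad c γ β).1 hαb).2)
      rw [← Finset.sum_biUnion hdisj]
      exact Summable.sum_le_tsum _
        (fun α _ => mul_nonneg (norm_nonneg _) (pow_nonneg hδ.le _)) hsum
  constructor
  · -- r ≤ radius
    have hS : Summable (fun d => ‖ps c γ β d‖ * r ^ d) := by
      apply hB.of_nonneg_of_le
        (fun d => mul_nonneg (norm_nonneg _) (pow_nonneg hrpos.le _))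
      intro d
      calc ‖ps c γ β d‖ * r ^ d ≤ (∑ α ∈ Ad c γ β d, ‖c α‖) * r ^ d := by
            apply mul_le_mul_of_nonneg_right (norm_ps_le c γ β d) (pow_nonneg hrpos.le _)
        _ = ∑ α ∈ Ad c γ β d, ‖c α‖ * r ^ d := by rw [Finset.sum_mul]
        _ ≤ ∑ α ∈ Ad c γ β d, ‖c α‖ * δ ^ (∑ i, α i) :=
            Finset.sum_le_sum (hbound d)
    have := FormalMultilinearSeries.le_radius_of_summable (r := r.toNNReal) (ps c γ β)
      (by simpa [Real.coe_toNNReal r hrpos.le] using hS)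
    exact this
  · exact ENNReal.ofReal_pos.2 hrpos
  · intro y hy
    rw [zero_add]
    have hylt : ‖y‖ < r := by
      rw [EMetric.mem_ball, edist_zero_right, ← ofReal_norm] at hy
      exact (ENNReal.ofReal_lt_ofReal_iff_of_nonneg (norm_nonneg _)).1 hy
    -- summability of the full family at y
    set a : {α : Fin n → ℕ // c α ≠ 0} → ℂ := fun α =>
      c α.1 * (∏ i, y.1 i ^ (α.1 i)) * y.2 ^ kk γ β α.1 with ha
    have hA : Summable a := by
      apply Summable.of_norm_bounded (g := fun α : {α : Fin n → ℕ // c α ≠ 0} =>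
        ‖c α.1‖ * δ ^ (∑ i, α.1 i)) (hsum.subtype _)
      intro α
      rw [ha]
      simp only [norm_mul, norm_prod, norm_pow]
      have h1 : ∀ i, ‖y.1 i‖ ≤ δ :=
        fun i => ((norm_le_pi_norm y.1 i).trans (norm_fst_le y)).trans (hylt.le.trans hrδ)
      have h2 : ‖y.2‖ ≤ 1 := (norm_snd_le y).trans (hylt.le.trans hr1)
      calc (‖c α.1‖ * ∏ i, ‖y.1 i‖ ^ α.1 i) * ‖y.2‖ ^ kk γ β α.1
          ≤ (‖c α.1‖ * ∏ i, δ ^ α.1 i) * 1 := by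
            apply mul_le_mul (mul_le_mul_of_nonneg_left
              (Finset.prod_le_prod (fun i _ => pow_nonneg (norm_nonneg _) _)
                (fun i _ => pow_le_pow_left₀ (norm_nonneg _) (h1 i) _)) (norm_nonneg _))
              (pow_le_one₀ (norm_nonneg _) h2)
              (pow_nonneg (norm_nonneg _) _)
              (mul_nonneg (norm_nonneg _) (Finset.prod_nonneg fun i _ =>
                pow_nonneg hδ.le _))
        _ = ‖c α.1‖ * δ ^ (∑ i, α.1 i) := by
            rw [mul_one, Finset.prod_pow_eq_pow_sum]
    have hAy : HasSum a (f y) := by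
      rw [hf y]
      exact hA.hasSum
    -- regroup by degree
    have hsig : HasSum (a ∘ (eqv c γ β).symm) (f y) :=
      ((eqv c γ β).symm.hasSum_iff).2 hAy
    have := hsig.sigma (fun d => hasSum_fintype
      (fun x : {α : Fin n → ℕ // α ∈ Ad c γ β d} => (a ∘ (eqv c γ β).symm) ⟨d, x⟩))
    have hfun : (fun d => ps c γ β d (fun _ => y)) =
        (fun d => ∑ b, (a ∘ ⇑(eqv c γ β).symm) ⟨d, b⟩) := by
      funext d
      rw [ps_apply, ← Finset.sum_coe_sort (Ad c γ β d)
        (fun α => c α * (∏ i, y.1 i ^ α i) * y.2 ^ kk γ β α)]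
      rfl
    rw [hfun]
    exact this


/-- With hypotheses as in Statement 2, the function
`f̃(w, τ) = ∑_{α, c_α ≠ 0} c_α w^α τ^{γ·α − γ·β}` (a `tsum`, which equals the sum
of the family where it is summable and `0` otherwise) is complex analytic at
every point `(ũ, 0)` with all coordinates of `ũ` nonzero. -/
theorem stmt3 (n : ℕ) (hn : 1 ≤ n) (c : (Fin n → ℕ) → ℂ) (δ : ℝ) (hδ : 0 < δ)
    (hsum : Summable (fun α : Fin n → ℕ => ‖c α‖ * δ ^ (∑ i, α i)))
    (γ : Fin n → ℕ) (hγ : ∀ i, 0 < γ i) (β : Fin n → ℕ)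
    (hβ : ∀ α : Fin n → ℕ, c α ≠ 0 → (∑ i, γ i * β i) ≤ (∑ i, γ i * α i))
    (f : (Fin n → ℂ) × ℂ → ℂ)
    (hf : ∀ p : (Fin n → ℂ) × ℂ,
      f p = ∑' α : {α : Fin n → ℕ // c α ≠ 0},
        c α.1 * (∏ i, p.1 i ^ (α.1 i)) *
          p.2 ^ ((∑ i, γ i * α.1 i) - (∑ i, γ i * β i)))
    (u : Fin n → ℂ) (hu : ∀ i, u i ≠ 0) :
    AnalyticAt ℂ f (u, 0) := by
  have hball := main_ball c δ hδ hsum γ β f hf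
  set r : ℝ := min δ 1 with hrdef
  have hrpos : 0 < r := lt_min hδ one_pos
  -- choose the scaling parameter t
  set t : ℝ := max 1 ((1 + ∑ i, ‖u i‖) / r) with htdef
  have ht1 : (1 : ℝ) ≤ t := le_max_left _ _
  have htpos : (0 : ℝ) < t := lt_of_lt_of_le one_pos ht1
  have htC : ((t : ℂ)) ≠ 0 := by
    simp only [ne_eq, Complex.ofReal_eq_zero]
    exact htpos.ne'
  have hkey : ∀ i, ‖u i‖ / t ^ γ i < r := by
    intro i
    have h1 : ‖u i‖ / t ^ γ i ≤ ‖u i‖ / t := by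
      apply div_le_div_of_nonneg_left (norm_nonneg _) htpos
      exact le_self_pow₀ ht1 (hγ i).ne'
    have h2 : ‖u i‖ / t < r := by
      rw [div_lt_iff₀ htpos]
      have h3 : (1 + ∑ j, ‖u j‖) / r ≤ t := le_max_right _ _
      have h4 : 1 + ∑ j, ‖u j‖ ≤ r * t := by
        rw [mul_comm, ← div_le_iff₀ hrpos]
        exact h3
      calc ‖u i‖ ≤ ∑ j, ‖u j‖ :=
            Finset.single_le_sum (fun j _ => norm_nonneg _) (Finset.mem_univ i)
        _ < 1 + ∑ j, ‖u j‖ := by linarith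
        _ ≤ r * t := h4
    exact lt_of_le_of_lt h1 h2
  -- the scaling linear map
  set L : ((Fin n → ℂ) × ℂ) →L[ℂ] ((Fin n → ℂ) × ℂ) :=
    (ContinuousLinearMap.pi fun i => (((t : ℂ) ^ γ i)⁻¹) •
        ((ContinuousLinearMap.proj i).comp (ContinuousLinearMap.fst ℂ (Fin n → ℂ) ℂ))).prod
      ((t : ℂ) • ContinuousLinearMap.snd ℂ (Fin n → ℂ) ℂ) with hLdef
  have hLapp : ∀ p : (Fin n → ℂ) × ℂ,
      L p = (fun i => ((t : ℂ) ^ γ i)⁻¹ * p.1 i, (t : ℂ) * p.2) := by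
    intro p
    rw [hLdef]
    ext i
    · simp
    · simp
  set m₀ : ℕ := ∑ i, γ i * β i with hm₀
  -- the scaling identity
  have hkeyeq : ∀ p : (Fin n → ℂ) × ℂ, f p = (t : ℂ) ^ m₀ * f (L p) := by
    intro p
    rw [hf p, hf (L p), ← tsum_mul_left]
    apply tsum_congr
    intro α
    rw [hLapp p]
    have hle : m₀ ≤ ∑ i, γ i * α.1 i := hβ α.1 α.2
    have hexp : m₀ + ((∑ i, γ i * α.1 i) - m₀) = ∑ i, γ i * α.1 i :=
      Nat.add_sub_cancel' hle
    simp only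
    have hprod : (∏ i, (((t : ℂ) ^ γ i)⁻¹ * p.1 i) ^ α.1 i) =
        ((t : ℂ) ^ (∑ i, γ i * α.1 i))⁻¹ * ∏ i, p.1 i ^ α.1 i := by
      simp only [mul_pow, inv_pow, ← pow_mul]
      rw [Finset.prod_mul_distrib, Finset.prod_inv_distrib, Finset.prod_pow_eq_pow_sum]
    rw [hprod, mul_pow]
    have hcancel : (t : ℂ) ^ m₀ * (((t : ℂ) ^ (∑ i, γ i * α.1 i))⁻¹ *
        (t : ℂ) ^ ((∑ i, γ i * α.1 i) - m₀)) = 1 := by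
      rw [← hexp, pow_add]
      field_simp
      rw [Nat.add_sub_cancel_left]
    calc c α.1 * (∏ i, p.1 i ^ α.1 i) * p.2 ^ ((∑ i, γ i * α.1 i) - m₀)
        = ((t : ℂ) ^ m₀ * (((t : ℂ) ^ (∑ i, γ i * α.1 i))⁻¹ *
            (t : ℂ) ^ ((∑ i, γ i * α.1 i) - m₀))) *
          (c α.1 * (∏ i, p.1 i ^ α.1 i) * p.2 ^ ((∑ i, γ i * α.1 i) - m₀)) := by
          rw [hcancel, one_mul]
      _ = (t : ℂ) ^ m₀ * (c α.1 * (((t : ℂ) ^ (∑ i, γ i * α.1 i))⁻¹ *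
            ∏ i, p.1 i ^ α.1 i) * ((t : ℂ) ^ ((∑ i, γ i * α.1 i) - m₀) *
            p.2 ^ ((∑ i, γ i * α.1 i) - m₀))) := by ring
  -- L (u, 0) is in the ball
  have hmem : L (u, 0) ∈ Metric.eball (0 : (Fin n → ℂ) × ℂ) (ENNReal.ofReal r) := by
    rw [EMetric.mem_ball, edist_zero_right, ← ofReal_norm]
    apply (ENNReal.ofReal_lt_ofReal_iff hrpos).2
    rw [hLapp (u, 0)]
    rw [Prod.norm_def]
    apply max_lt
    · apply (pi_norm_lt_iff hrpos).2
      intro i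
      simp only [norm_mul, norm_inv, norm_pow, Complex.norm_real]
      rw [Real.norm_of_nonneg htpos.le]
      rw [← div_eq_inv_mul]
      exact hkey i
    · simpa using hrpos
  -- conclude
  have hfa : AnalyticAt ℂ f (L (u, 0)) := hball.analyticAt_of_mem hmem
  have hcomp : AnalyticAt ℂ (fun p => (t : ℂ) ^ m₀ * f (L p)) (u, 0) :=
    analyticAt_const.mul (hfa.comp (L.analyticAt (u, 0)))
  exact hcomp.congr (Filter.Eventually.of_forall fun p => (hkeyeq p).symm)
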